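/- Let w ≥ 1 and suppose ε_1, ε_2, ... is a sequence of nonnegative reals satisfying: ε_t ≤ (ε/2 - Σ_{k=t-w+1}^{t-1} ε_k)/2 for every t (with ε_k = 0 for k ≤ 0). Then for every t ≥ 1, Σ_{k=t-w+1}^{t} ε_k ≤ ε/2. -/
import Mathlib

lemma int_sum_Icc_succ_top' {a b : ℤ} (h : a ≤ b + 1) (f : ℤ → ℝ) :
    ∑ k ∈ Finset.Icc a (b + 1), f k = (∑ k ∈ Finset.Icc a b, f k) + f (b + 1) := by
  have hins : Finset.Icc a (b + 1) = insert (b + 1) (Finset.Icc a b) := by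
    ext x; simp only [Finset.mem_Icc, Finset.mem_insert]; omega
  rw [hins, Finset.sum_insert (by simp), add_comm]

/-- Budget-accounting invariant of LBD: if at each timestamp the allocated budget is at
most half of the remaining publication budget in the current window of size `w`, then
the sliding-window sum of allocated budgets never exceeds `ε/2`. -/
theorem stmt_8 (w : ℕ) (hw : 1 ≤ w) (ε : ℝ) (e : ℤ → ℝ)
    (hnonneg : ∀ t, 0 ≤ e t)
    (hzero : ∀ t : ℤ, t ≤ 0 → e t = 0)
    (halloc : ∀ t : ℤ, 1 ≤ t →
      e t ≤ (ε / 2 - ∑ k ∈ Finset.Icc (t - w + 1) (t - 1), e k) / 2) :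
    ∀ t : ℤ, 1 ≤ t → ∑ k ∈ Finset.Icc (t - w + 1) t, e k ≤ ε / 2 := by
  have hw' : (1 : ℤ) ≤ (w : ℤ) := by exact_mod_cast hw
  have hzsum : ∀ a b : ℤ, b ≤ 0 → (∑ k ∈ Finset.Icc a b, e k) = 0 := by
    intro a b hb
    apply Finset.sum_eq_zero
    intro k hk
    exact hzero k (le_trans (Finset.mem_Icc.mp hk).2 hb)
  refine Int.le_induction ?_ ?_
  · -- base case t = 1
    have h1 := halloc 1 le_rfl
    rw [hzsum _ _ (by omega)] at h1
    have heps : 0 ≤ ε / 2 := by have := hnonneg 1; linarith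
    have hsplit := int_sum_Icc_succ_top' (a := 1 - (w:ℤ) + 1) (b := 0) (by omega) e
    norm_num at hsplit ⊢
    rw [hsplit, hzsum _ _ le_rfl]
    linarith
  · -- inductive step
    intro t ht ih
    have hsub : ∑ k ∈ Finset.Icc (t + 1 - (w:ℤ) + 1) t, e k
        ≤ ∑ k ∈ Finset.Icc (t - (w:ℤ) + 1) t, e k := by
      apply Finset.sum_le_sum_of_subset_of_nonneg
      · exact Finset.Icc_subset_Icc_left (by omega)
      · intro i _ _; exact hnonneg i
    have hS : ∑ k ∈ Finset.Icc (t + 1 - (w:ℤ) + 1) t, e k ≤ ε / 2 := le_trans hsub ih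
    have h1 := halloc (t + 1) (by omega)
    rw [show t + 1 - 1 = t by ring] at h1
    have hsplit := int_sum_Icc_succ_top' (a := t + 1 - (w:ℤ) + 1) (b := t) (by omega) e
    rw [hsplit]
    linarith
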